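/- Let $\hat{C}$ be a $p\times p$ positive definite matrix with unit diagonal, $R$ a $p\times p$ positive definite matrix with unit diagonal, and $\alpha < 1$. Set $A = (R \odot \hat{C})/(1-\alpha)$. If $D$ is a diagonal matrix with positive entries satisfying $DADe = e$, then every diagonal entry $D_{ii}$ satisfies $\frac{\sqrt{(1-\alpha)\lambda_{\min}(\hat{C})}}{p} \leq D_{ii} \leq \sqrt{\frac{p(1-\alpha)}{\lambda_{\min}(\hat{C})}}$. -/

import Mathlib

/-- The smallest eigenvalue of a matrix, defined as the infimum of its eigenvalues. -/
noncomputable def lambdaMin {p : ℕ} (A : Matrix (Fin p) (Fin p) ℝ) : ℝ :=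
  sInf {μ : ℝ | ∃ v : Fin p → ℝ, v ≠ 0 ∧ A.mulVec v = μ • v}

open Matrix Finset

section Aux

variable {p : ℕ}

lemma quad_nonneg' {M : Matrix (Fin p) (Fin p) ℝ} (hM : M.PosSemidef) (x : Fin p → ℝ) :
    0 ≤ x ⬝ᵥ M *ᵥ x := by simpa using hM.dotProduct_mulVec_nonneg x

lemma rayleigh' (C : Matrix (Fin p) (Fin p) ℝ) (hC : C.IsHermitian) (m : ℝ)
    (hm : ∀ k, m ≤ hC.eigenvalues k) (v : Fin p → ℝ) :
    m * (v ⬝ᵥ v) ≤ v ⬝ᵥ C *ᵥ v := by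
  set U : Matrix (Fin p) (Fin p) ℝ := (hC.eigenvectorUnitary : Matrix (Fin p) (Fin p) ℝ) with hU
  have hUmem : U ∈ Matrix.unitaryGroup (Fin p) ℝ := hC.eigenvectorUnitary.2
  have hUU : U * star U = 1 := (Matrix.mem_unitaryGroup_iff.mp hUmem)
  have hspec : C = U * Matrix.diagonal hC.eigenvalues * star U := by
    have h := hC.spectral_theorem
    rw [Unitary.conjStarAlgAut_apply] at h
    exact h
  set w : Fin p → ℝ := (star U) *ᵥ v with hw
  have key : ∀ x y : Fin p → ℝ, x ⬝ᵥ (U *ᵥ y) = ((star U) *ᵥ x) ⬝ᵥ y := by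
    intro x y
    rw [Matrix.dotProduct_mulVec]
    congr 1
    rw [Matrix.star_eq_conjTranspose, Matrix.conjTranspose_eq_transpose_of_trivial,
      ← Matrix.mulVec_transpose]
  have h1 : v ⬝ᵥ C *ᵥ v = w ⬝ᵥ (Matrix.diagonal hC.eigenvalues) *ᵥ w := by
    conv_lhs => rw [hspec]
    rw [← Matrix.mulVec_mulVec, ← Matrix.mulVec_mulVec, key]
  have h2 : v ⬝ᵥ v = w ⬝ᵥ w := by
    have : w ⬝ᵥ w = v ⬝ᵥ (U *ᵥ w) := (key v w).symm
    rw [dotProduct_comm w w, this, hw, Matrix.mulVec_mulVec, hUU, Matrix.one_mulVec]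
  rw [h1, h2]
  have hdiag : w ⬝ᵥ (Matrix.diagonal hC.eigenvalues) *ᵥ w = ∑ k, hC.eigenvalues k * (w k * w k) := by
    simp [dotProduct, Matrix.mulVec_diagonal]
    congr 1; funext k; ring
  rw [hdiag, dotProduct, Finset.mul_sum]
  refine Finset.sum_le_sum fun k _ => ?_
  have : 0 ≤ w k * w k := mul_self_nonneg _
  nlinarith [hm k]

open scoped MatrixOrder in
lemma schur' {R B : Matrix (Fin p) (Fin p) ℝ} (hR : R.PosSemidef) (hB : B.PosSemidef) :
    (Matrix.hadamard R B).PosSemidef := by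
  set S := CFC.sqrt B with hSdef
  have hSS : S * S = B := CFC.sqrt_mul_sqrt_self B hB.nonneg
  have hSherm : S.IsHermitian := (CFC.sqrt_nonneg B).posSemidef.1
  refine Matrix.PosSemidef.of_dotProduct_mulVec_nonneg ?_ ?_
  · ext i j
    simp only [Matrix.conjTranspose_apply, Matrix.hadamard_apply, star_trivial]
    rw [← hR.1.apply j i, ← hB.1.apply j i]; simp
  · intro x
    have hx : (star x : Fin p → ℝ) = x := by simp
    rw [hx]
    have expand : x ⬝ᵥ (Matrix.hadamard R B) *ᵥ x
        = ∑ k, (fun i => x i * S i k) ⬝ᵥ R *ᵥ (fun i => x i * S i k) := by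
      simp only [dotProduct, Matrix.mulVec, Matrix.hadamard_apply]
      have hBij : ∀ i j, B i j = ∑ k, S i k * S j k := by
        intro i j
        rw [← hSS, Matrix.mul_apply]
        refine Finset.sum_congr rfl fun k _ => ?_
        rw [← hSherm.apply j k]; simp
      calc ∑ i, x i * ∑ j, R i j * B i j * x j
          = ∑ i, ∑ j, ∑ k, (x i * S i k) * R i j * (x j * S j k) := by
            refine Finset.sum_congr rfl fun i _ => ?_
            rw [Finset.mul_sum]
            refine Finset.sum_congr rfl fun j _ => ?_
            rw [hBij i j, Finset.mul_sum, Finset.sum_mul, Finset.mul_sum]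
            refine Finset.sum_congr rfl fun k _ => ?_
            ring
        _ = ∑ i, ∑ k, ∑ j, (x i * S i k) * R i j * (x j * S j k) :=
            Finset.sum_congr rfl fun i _ => Finset.sum_comm
        _ = ∑ k, ∑ i, ∑ j, (x i * S i k) * R i j * (x j * S j k) := Finset.sum_comm
        _ = ∑ k, ∑ i, (x i * S i k) * ∑ j, R i j * (x j * S j k) := by
            refine Finset.sum_congr rfl fun k _ => Finset.sum_congr rfl fun i _ => ?_
            rw [Finset.mul_sum]
            refine Finset.sum_congr rfl fun j _ => ?_
            ring
        _ = ∑ k, (fun i => x i * S i k) ⬝ᵥ R *ᵥ (fun i => x i * S i k) := rfl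
    rw [expand]
    exact Finset.sum_nonneg fun k _ => quad_nonneg' hR _

end Aux

lemma entry_abs_le' {p : ℕ} {M : Matrix (Fin p) (Fin p) ℝ} (hM : M.PosSemidef)
    (hdg : ∀ i, M i i = 1) (i j : Fin p) : |M i j| ≤ 1 := by
  rcases eq_or_ne i j with rfl | hij
  · simp [hdg i]
  · have hsym : M j i = M i j := by rw [← hM.1.apply i j]; simp
    have h1 := quad_nonneg' hM (Pi.single i 1 + Pi.single j 1)
    have h2 := quad_nonneg' hM (Pi.single i 1 - Pi.single j 1)
    simp only [Matrix.mulVec_add, Matrix.mulVec_sub, Matrix.mulVec_single,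
      add_dotProduct, sub_dotProduct, single_dotProduct, MulOpposite.op_one, one_smul,
      Matrix.col_apply, Pi.add_apply, Pi.sub_apply, mul_one, one_mul] at h1 h2
    rw [hdg i, hdg j, hsym] at h1 h2
    rw [abs_le]
    constructor <;> linarith

lemma lambdaMin_spec' {p : ℕ} (hp : 0 < p) (C : Matrix (Fin p) (Fin p) ℝ) (hC : C.PosDef) :
    0 < lambdaMin C ∧ ∀ k, lambdaMin C ≤ hC.1.eigenvalues k := by
  have hne : Nonempty (Fin p) := ⟨⟨0, hp⟩⟩
  have hu : (Finset.univ : Finset (Fin p)).Nonempty := Finset.univ_nonempty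
  set m0 := Finset.univ.inf' hu hC.1.eigenvalues with hm0def
  obtain ⟨k0, -, hk0⟩ := Finset.exists_mem_eq_inf' hu hC.1.eigenvalues
  have hm0le : ∀ k, m0 ≤ hC.1.eigenvalues k := fun k => Finset.inf'_le _ (Finset.mem_univ k)
  have hmem : m0 ∈ {μ : ℝ | ∃ v : Fin p → ℝ, v ≠ 0 ∧ C.mulVec v = μ • v} := by
    refine ⟨⇑(hC.1.eigenvectorBasis k0), ?_, ?_⟩
    · intro h
      have h0 : hC.1.eigenvectorBasis k0 = 0 := by
        ext a; exact congrFun h a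
      have hn := (hC.1.eigenvectorBasis).orthonormal.1 k0
      rw [h0] at hn; simp at hn
    · rw [hm0def, hk0]; exact hC.1.mulVec_eigenvectorBasis k0
  have hlb : ∀ x ∈ {μ : ℝ | ∃ v : Fin p → ℝ, v ≠ 0 ∧ C.mulVec v = μ • v}, m0 ≤ x := by
    rintro x ⟨v, hv, hxv⟩
    have hq := rayleigh' C hC.1 m0 hm0le v
    rw [hxv] at hq
    have hvx : v ⬝ᵥ (x • v) = x * (v ⬝ᵥ v) := by
      simp [dotProduct, Finset.mul_sum]
      refine Finset.sum_congr rfl fun b _ => by ring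
    rw [hvx] at hq
    have hvv : 0 < v ⬝ᵥ v := by
      obtain ⟨a, ha⟩ := Function.ne_iff.mp hv
      exact Finset.sum_pos' (fun b _ => mul_self_nonneg _)
        ⟨a, Finset.mem_univ a, mul_self_pos.mpr ha⟩
    exact le_of_mul_le_mul_right hq hvv
  have heq : lambdaMin C = m0 :=
    le_antisymm (csInf_le ⟨m0, hlb⟩ hmem) (le_csInf ⟨m0, hmem⟩ hlb)
  rw [heq]
  refine ⟨?_, hm0le⟩
  rw [hm0def, hk0]
  exact hC.eigenvalues_pos k0

theorem stmt_6 {p : ℕ} (hp : 0 < p) (C R : Matrix (Fin p) (Fin p) ℝ)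
    (hC : C.PosDef) (hCd : ∀ i, C i i = 1)
    (hR : R.PosDef) (hRd : ∀ i, R i i = 1)
    (α : ℝ) (hα : α < 1)
    (A : Matrix (Fin p) (Fin p) ℝ) (hA : A = (1 / (1 - α)) • Matrix.hadamard R C)
    (d : Fin p → ℝ) (hd : ∀ i, 0 < d i)
    (hscal : ∀ i, d i * ∑ j, A i j * d j = 1) :
    ∀ i, Real.sqrt ((1 - α) * lambdaMin C) / p ≤ d i ∧
      d i ≤ Real.sqrt (p * (1 - α) / lambdaMin C) := by
  have h1α : (0:ℝ) < 1 - α := by linarith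
  haveI : Nonempty (Fin p) := ⟨⟨0, hp⟩⟩
  obtain ⟨hm_pos, hm_le⟩ := lambdaMin_spec' hp C hC
  set m := lambdaMin C with hm
  -- B = C - m • 1 is PSD
  have hB : (C - m • (1 : Matrix (Fin p) (Fin p) ℝ)).PosSemidef := by
    refine Matrix.PosSemidef.of_dotProduct_mulVec_nonneg ?_ ?_
    · rw [Matrix.IsHermitian, Matrix.conjTranspose_sub, Matrix.conjTranspose_smul,
        Matrix.conjTranspose_one, hC.1]
      simp
    · intro x
      have hx : (star x : Fin p → ℝ) = x := by simp
      rw [hx, Matrix.sub_mulVec, dotProduct_sub, Matrix.smul_mulVec,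
        Matrix.one_mulVec, dotProduct_smul, smul_eq_mul]
      have := rayleigh' C hC.1 m hm_le x
      linarith
  have hRB : (Matrix.hadamard R (C - m • 1)).PosSemidef := schur' hR.posSemidef hB
  have hhad : Matrix.hadamard R (C - m • (1 : Matrix (Fin p) (Fin p) ℝ))
      = Matrix.hadamard R C - m • 1 := by
    ext a b
    simp only [Matrix.hadamard_apply, Matrix.sub_apply, Matrix.smul_apply, Matrix.one_apply,
      smul_eq_mul]
    rcases eq_or_ne a b with rfl | h
    · simp [hRd a, mul_sub]
    · simp [h, mul_sub]
  rw [hhad] at hRB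
  have key : ∀ x : Fin p → ℝ, m * (x ⬝ᵥ x) ≤ x ⬝ᵥ (Matrix.hadamard R C) *ᵥ x := by
    intro x
    have h0 := quad_nonneg' hRB x
    rw [Matrix.sub_mulVec, dotProduct_sub, Matrix.smul_mulVec,
      Matrix.one_mulVec, dotProduct_smul, smul_eq_mul] at h0
    linarith
  -- trace identity
  have hpR : (0:ℝ) < p := by exact_mod_cast hp
  have hsum : d ⬝ᵥ (Matrix.hadamard R C) *ᵥ d = (1 - α) * p := by
    have h1 : ∑ i, d i * ∑ j, A i j * d j = (p : ℝ) := by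
      simp [hscal]
    have h2 : d ⬝ᵥ A *ᵥ d = (p : ℝ) := by
      rw [← h1]; rfl
    rw [hA, Matrix.smul_mulVec, dotProduct_smul, smul_eq_mul] at h2
    field_simp at h2
    linarith
  set s := d ⬝ᵥ d with hsdef
  have hms : m * s ≤ (1 - α) * p := by
    have := key d
    rw [hsum] at this
    exact this
  have hs_nonneg : 0 ≤ s := Finset.sum_nonneg fun j _ => mul_self_nonneg _
  intro i
  constructor
  · -- lower bound
    have hC1 : ∀ a b, |C a b| ≤ 1 := entry_abs_le' hC.posSemidef hCd
    have hR1 : ∀ a b, |R a b| ≤ 1 := entry_abs_le' hR.posSemidef hRd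
    set T := ∑ j, d j with hT
    have hT_pos : 0 < T := Finset.sum_pos (fun j _ => hd j) Finset.univ_nonempty
    have hstep : (1:ℝ) ≤ d i * ((1 / (1 - α)) * T) := by
      have := hscal i
      have hle : ∑ j, A i j * d j ≤ ∑ j, (1 / (1 - α)) * d j := by
        refine Finset.sum_le_sum fun j _ => ?_
        refine mul_le_mul_of_nonneg_right ?_ (hd j).le
        rw [hA]
        simp only [Matrix.smul_apply, Matrix.hadamard_apply, smul_eq_mul]
        have h1 : R i j * C i j ≤ 1 := by
          have := abs_mul (R i j) (C i j) ▸ mul_le_one₀ (hR1 i j) (abs_nonneg _) (hC1 i j)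
          calc R i j * C i j ≤ |R i j * C i j| := le_abs_self _
            _ ≤ 1 := by rw [abs_mul]; exact mul_le_one₀ (hR1 i j) (abs_nonneg _) (hC1 i j)
        have h2 : (0:ℝ) ≤ 1 / (1 - α) := by positivity
        nlinarith
      calc (1:ℝ) = d i * ∑ j, A i j * d j := (hscal i).symm
        _ ≤ d i * ∑ j, (1 / (1 - α)) * d j := by
            exact mul_le_mul_of_nonneg_left hle (hd i).le
        _ = d i * ((1 / (1 - α)) * T) := by rw [← Finset.mul_sum]
    have hT2 : T ^ 2 ≤ p * s := by
      have := sq_sum_le_card_mul_sum_sq (s := (Finset.univ : Finset (Fin p))) (f := d)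
      simp only [Finset.card_univ, Fintype.card_fin] at this
      have hss : s = ∑ j, d j ^ 2 := by
        rw [hsdef]; exact Finset.sum_congr rfl fun j _ => (sq (d j)).symm ▸ by ring
      rw [hss]
      exact_mod_cast this
    set a := Real.sqrt (1 - α) with ha
    set b := Real.sqrt m with hb
    have ha2 : a ^ 2 = 1 - α := Real.sq_sqrt h1α.le
    have hb2 : b ^ 2 = m := Real.sq_sqrt hm_pos.le
    have ha_pos : 0 < a := Real.sqrt_pos.mpr h1α
    have hb_pos : 0 < b := Real.sqrt_pos.mpr hm_pos
    have hsqrtm : Real.sqrt ((1 - α) * m) = a * b := Real.sqrt_mul h1α.le m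
    rw [hsqrtm, div_le_iff₀ hpR]
    -- (T*b)^2 ≤ (p*a)^2
    have hTb : T * b ≤ p * a := by
      have hsq : (T * b) ^ 2 ≤ (p * a) ^ 2 := by
        have e1 : (T * b) ^ 2 = T ^ 2 * m := by rw [mul_pow, hb2]
        have e2 : (p * a) ^ 2 = (p:ℝ)^2 * (1 - α) := by rw [mul_pow, ha2]
        rw [e1, e2]
        nlinarith [hT2, hms, hm_pos, hs_nonneg, hpR]
      nlinarith [mul_pos hT_pos hb_pos, mul_pos hpR ha_pos]
    have hdT : a ^ 2 ≤ d i * T := by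
      rw [ha2]
      have := mul_le_mul_of_nonneg_right hstep h1α.le
      calc (1 - α) = 1 * (1 - α) := (one_mul _).symm
        _ ≤ d i * ((1 / (1 - α)) * T) * (1 - α) := this
        _ = d i * T := by field_simp
    -- a^2 * b ≤ d i * (p * a)
    have h5 : a ^ 2 * b ≤ d i * (p * a) := by
      calc a ^ 2 * b ≤ (d i * T) * b := mul_le_mul_of_nonneg_right hdT hb_pos.le
        _ = d i * (T * b) := by ring
        _ ≤ d i * (p * a) := mul_le_mul_of_nonneg_left hTb (hd i).le
    have : a * (a * b) ≤ a * (d i * p) := by nlinarith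
    exact le_of_mul_le_mul_left this ha_pos
  · -- upper bound
    have hdi2 : d i ^ 2 ≤ s := by
      have : d i * d i ≤ s := Finset.single_le_sum (f := fun j => d j * d j)
        (fun j _ => mul_self_nonneg _) (Finset.mem_univ i)
      nlinarith
    rw [Real.le_sqrt' (hd i), le_div_iff₀ hm_pos]
    nlinarith
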